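/- Let c ∈ ℂ with Re(c) > 0. For every τ₀ ∈ S_c there exist a neighbourhood V₀ of τ₀ in ℂ and real constants α₁ > 0, α₂ > 0 and α₃ with 2α₂ + α₃ > 0 and 2α₂ − α₃ > 0, such that |K_c(τ, x, y)| ≤ α₁ exp(α₃ x y − α₂(x² + y²)) for all τ ∈ V₀ ∩ S_c and all x, y ∈ ℝ. -/

import Mathlib

open Complex MeasureTheory

/-- The maximal sector `S_c` of the bounded holomorphic semigroup generated by `-H_c`. -/
noncomputable def sector (c : ℂ) : Set ℂ :=
  if 0 < c.im then
    {τ : ℂ | τ ≠ 0 ∧ -(Real.pi / 2) ≤ τ.arg ∧ τ.arg ≤ Real.pi / 2 - c.arg}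
  else if c.im = 0 then
    {τ : ℂ | τ ≠ 0 ∧ -(Real.pi / 2) < τ.arg ∧ τ.arg < Real.pi / 2}
  else
    {τ : ℂ | τ ≠ 0 ∧ -(Real.pi / 2) - c.arg ≤ τ.arg ∧ τ.arg ≤ Real.pi / 2}

/-- `λ = exp(-2 c^{1/2} τ)`. -/
noncomputable def lam (c τ : ℂ) : ℂ := Complex.exp (-2 * c ^ ((1 : ℂ) / 2) * τ)

/-- `w₁ = c^{1/4} λ^{1/2} (π (1 - λ²))^{-1/2}`. -/
noncomputable def w₁ (c τ : ℂ) : ℂ :=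
  c ^ ((1 : ℂ) / 4) * lam c τ ^ ((1 : ℂ) / 2) *
    ((Real.pi : ℂ) * (1 - lam c τ ^ 2)) ^ (-(1 : ℂ) / 2)

/-- `w₂ = c^{1/2} (1 + λ²) / (2 (1 - λ²))`. -/
noncomputable def w₂ (c τ : ℂ) : ℂ :=
  c ^ ((1 : ℂ) / 2) * (1 + lam c τ ^ 2) / (2 * (1 - lam c τ ^ 2))

/-- `w₃ = 2 c^{1/2} λ / (1 - λ²)`. -/
noncomputable def w₃ (c τ : ℂ) : ℂ :=
  2 * c ^ ((1 : ℂ) / 2) * lam c τ / (1 - lam c τ ^ 2)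

/-- The Mehler kernel `K_c(τ, x, y) = w₁ exp(w₃ x y - w₂ (x² + y²))`. -/
noncomputable def mehlerK (c τ : ℂ) (x y : ℝ) : ℂ :=
  w₁ c τ * Complex.exp (w₃ c τ * (x : ℂ) * (y : ℂ) - w₂ c τ * ((x : ℂ) ^ 2 + (y : ℂ) ^ 2))

section aux

lemma sector_re_facts (c : ℂ) (hc : 0 < c.re) (τ : ℂ) (hτ : τ ∈ sector c) :
    τ ≠ 0 ∧ 0 ≤ τ.re ∧ 0 ≤ (c * τ).re ∧ (c.im = 0 → 0 < τ.re ∧ 0 < (c * τ).re) := by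
  have hπ := Real.pi_pos
  have hargc : |c.arg| < Real.pi / 2 := Complex.abs_arg_lt_pi_div_two_iff.2 (Or.inl hc)
  have hargc' := abs_lt.1 hargc
  have hmulre : (c * τ).re = ‖c‖ * ‖τ‖ * Real.cos (c.arg + τ.arg) := by
    rw [Real.cos_add, Complex.mul_re, ← Complex.norm_mul_cos_arg c, ← Complex.norm_mul_sin_arg c,
      ← Complex.norm_mul_cos_arg τ, ← Complex.norm_mul_sin_arg τ]
    ring
  unfold sector at hτ
  split_ifs at hτ with h1 h2
  · obtain ⟨hne, hlo, hhi⟩ := hτ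
    have hargc0 : 0 ≤ c.arg := Complex.arg_nonneg_iff.2 h1.le
    have hτre : 0 ≤ τ.re := by
      rw [← Complex.abs_arg_le_pi_div_two_iff]
      exact abs_le.2 ⟨by linarith, by linarith⟩
    refine ⟨hne, hτre, ?_, fun h => absurd h (by linarith [h1] : c.im ≠ 0)⟩
    · rw [hmulre]
      have : 0 ≤ Real.cos (c.arg + τ.arg) :=
        Real.cos_nonneg_of_mem_Icc ⟨by linarith, by linarith⟩
      positivity
  · obtain ⟨hne, hlo, hhi⟩ := hτ
    have hargc0 : c.arg = 0 := Complex.arg_eq_zero_iff.2 ⟨hc.le, h2⟩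
    have hτre : 0 < τ.re := by
      rcases Complex.abs_arg_lt_pi_div_two_iff.1 (abs_lt.2 ⟨hlo, hhi⟩) with h | h
      · exact h
      · exact absurd h hne
    have hpos : 0 < (c * τ).re := by
      rw [hmulre, hargc0, zero_add]
      have hcos : 0 < Real.cos τ.arg := Real.cos_pos_of_mem_Ioo ⟨hlo, hhi⟩
      have h0 : 0 < ‖c‖ := norm_pos_iff.mpr (fun h => by simp [h] at hc)
      have h0' : 0 < ‖τ‖ := norm_pos_iff.mpr hne
      exact mul_pos (mul_pos h0 h0') hcos
    exact ⟨hne, hτre.le, hpos.le, fun _ => ⟨hτre, hpos⟩⟩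
  · obtain ⟨hne, hlo, hhi⟩ := hτ
    have him : c.im < 0 := lt_of_le_of_ne (not_lt.1 h1) h2
    have hargc0 : c.arg ≤ 0 := (Complex.arg_neg_iff.2 him).le
    have hτre : 0 ≤ τ.re := by
      rw [← Complex.abs_arg_le_pi_div_two_iff]
      exact abs_le.2 ⟨by linarith, by linarith⟩
    refine ⟨hne, hτre, ?_, fun h => absurd h (by linarith : c.im ≠ 0)⟩
    rw [hmulre]
    have : 0 ≤ Real.cos (c.arg + τ.arg) :=
      Real.cos_nonneg_of_mem_Icc ⟨by linarith, by linarith⟩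
    positivity

lemma sqrt_re_pos (c : ℂ) (hc : 0 < c.re) : 0 < (c ^ ((1:ℂ)/2)).re := by
  have hc0 : c ≠ 0 := fun h => by simp [h] at hc
  have hargc : |c.arg| < Real.pi / 2 := Complex.abs_arg_lt_pi_div_two_iff.2 (Or.inl hc)
  have hargc' := abs_lt.1 hargc
  have hπ := Real.pi_pos
  rw [Complex.cpow_def_of_ne_zero hc0, Complex.exp_re]
  have him : (Complex.log c * (1/2)).im = c.arg / 2 := by
    simp [Complex.mul_im, Complex.log_im]
    ring
  rw [him]
  have hcos : 0 < Real.cos (c.arg / 2) :=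
    Real.cos_pos_of_mem_Ioo ⟨by linarith, by linarith⟩
  positivity

lemma sqrt_sq (c : ℂ) : (c ^ ((1:ℂ)/2))^2 = c := by
  have h : ((1:ℂ)/2) = (((2:ℕ)):ℂ)⁻¹ := by norm_num
  rw [h]
  exact_mod_cast Complex.cpow_nat_inv_pow c two_ne_zero

lemma key_uv (s τ : ℂ) (ha : 0 < s.re) (hne : τ ≠ 0) (h1 : 0 ≤ τ.re)
    (h2 : 0 ≤ (s ^ 2 * τ).re) (h3 : (s ^ 2).im = 0 → 0 < τ.re ∧ 0 < (s ^ 2 * τ).re) :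
    0 < (s * τ).re ∧ |s.im| * |(s * τ).im| ≤ s.re * (s * τ).re := by
  set a := s.re with hadef
  set b := s.im with hbdef
  have hu : (s * τ).re = a * τ.re - b * τ.im := by simp [Complex.mul_re]; rfl
  have hv : (s * τ).im = a * τ.im + b * τ.re := by simp [Complex.mul_im]; rfl
  have hcre : (s ^ 2).re = a * a - b * b := by simp [pow_two, Complex.mul_re]; rfl
  have hcim : (s ^ 2).im = 2 * a * b := by simp [pow_two, Complex.mul_im]; ring
  have he2 : (s ^ 2 * τ).re = (a * a - b * b) * τ.re - (2 * a * b) * τ.im := by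
    rw [Complex.mul_re, hcre, hcim]
  have key1 : a * (s * τ).re - b * (s * τ).im = (s ^ 2 * τ).re := by
    rw [hu, hv, he2]; ring
  have key2 : a * (s * τ).re + b * (s * τ).im = (a ^ 2 + b ^ 2) * τ.re := by
    rw [hu, hv]; ring
  have habs : |b * (s * τ).im| ≤ a * (s * τ).re := by
    rw [abs_le]
    constructor
    · nlinarith [sq_nonneg a, sq_nonneg b]
    · nlinarith
  have hun : 0 ≤ (s * τ).re := by nlinarith [abs_nonneg (b * (s * τ).im)]
  have hupos : 0 < (s * τ).re := by
    rcases eq_or_ne b 0 with hb | hb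
    · obtain ⟨hτre, hcτ⟩ := h3 (by rw [hcim, hb]; ring)
      nlinarith
    · rcases lt_or_eq_of_le hun with h | h
      · exact h
      · exfalso
        have hbv : b * (s * τ).im = 0 := by
          have := habs; rw [← h] at this
          have h0 : |b * (s * τ).im| ≤ 0 := by linarith [this]
          simpa [abs_nonneg, le_antisymm h0 (abs_nonneg _)] using le_antisymm h0 (abs_nonneg _)
        have hvim : (s * τ).im = 0 := by
          rcases mul_eq_zero.1 hbv with h' | h'
          · exact absurd h' hb
          · exact h'
        have hsτ : s * τ = 0 := by
          apply Complex.ext <;> simp [← h, hvim]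
        have hs0 : s ≠ 0 := fun h' => by simp [hadef, h'] at ha
        exact hne ((mul_eq_zero.1 hsτ).resolve_left hs0)
  refine ⟨hupos, ?_⟩
  calc |b| * |(s * τ).im| = |b * (s * τ).im| := (abs_mul _ _).symm
    _ ≤ a * (s * τ).re := habs

lemma key_L (s τ : ℂ) (ha : 0 < s.re) (hu : 0 < (s * τ).re)
    (huv : |s.im| * |(s * τ).im| ≤ s.re * (s * τ).re) :
    |2 * s.im * (Complex.exp (-2 * s * τ)).im| <
      s.re * (1 - Complex.normSq (Complex.exp (-2 * s * τ))) := by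
  set u := (s * τ).re with hudef
  set v := (s * τ).im with hvdef
  have harg : (-2 * s * τ) = (-2 : ℂ) * (s * τ) := by ring
  have hre : (-2 * s * τ).re = -2 * u := by
    rw [harg, hudef, Complex.mul_re]; simp
  have him : (-2 * s * τ).im = -2 * v := by
    rw [harg, hvdef, Complex.mul_im]; simp
  set E := Real.exp (-2 * u) with hEdef
  have hE : 0 < E := Real.exp_pos _
  have hLim : (Complex.exp (-2 * s * τ)).im = E * Real.sin (-2 * v) := by
    rw [Complex.exp_im, hre, him]
  have hLsq : Complex.normSq (Complex.exp (-2 * s * τ)) = E ^ 2 := by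
    rw [Complex.normSq_eq_norm_sq, Complex.norm_exp, hre]
  rw [hLim, hLsq]
  have hsin : |Real.sin (-2 * v)| ≤ 2 * |v| := by
    calc |Real.sin (-2 * v)| ≤ |(-2 * v)| := Real.abs_sin_le_abs
      _ = 2 * |v| := by rw [abs_mul]; norm_num
  have hsinh : 2 * u < Real.sinh (2 * u) := Real.self_lt_sinh_iff.2 (by linarith)
  have hsinheq : Real.sinh (2 * u) = (Real.exp (2 * u) - E) / 2 := by
    rw [Real.sinh_eq, hEdef]; ring_nf
  have hEE : Real.exp (2 * u) * E = 1 := by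
    rw [hEdef, ← Real.exp_add]; norm_num
  have hkey : 4 * E * (s.re * u) < s.re * (1 - E ^ 2) := by
    rw [hsinheq] at hsinh
    have h4u : 4 * u < Real.exp (2 * u) - E := by linarith
    have h4uE : (4 * u) * E < (Real.exp (2 * u) - E) * E :=
      mul_lt_mul_of_pos_right h4u hE
    have h5 : 4 * u * E < 1 - E ^ 2 := by nlinarith
    nlinarith [mul_lt_mul_of_pos_left h5 ha]
  calc |2 * s.im * (E * Real.sin (-2 * v))|
      = 2 * E * (|s.im| * |Real.sin (-2 * v)|) := by
        rw [abs_mul, abs_mul, abs_mul]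
        simp [abs_of_pos hE]
        ring
    _ ≤ 2 * E * (|s.im| * (2 * |v|)) := by
        have h1 : |s.im| * |Real.sin (-2 * v)| ≤ |s.im| * (2 * |v|) :=
          mul_le_mul_of_nonneg_left hsin (abs_nonneg _)
        nlinarith [hE]
    _ = 4 * E * (|s.im| * |v|) := by ring
    _ ≤ 4 * E * (s.re * u) := by nlinarith [hE]
    _ < s.re * (1 - E ^ 2) := hkey

lemma wident (c τ : ℂ) (h1 : 1 - lam c τ ≠ 0) (h2 : 1 + lam c τ ≠ 0) :
    2 * w₂ c τ + w₃ c τ = c ^ ((1:ℂ)/2) * (1 + lam c τ) / (1 - lam c τ) ∧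
    2 * w₂ c τ - w₃ c τ = c ^ ((1:ℂ)/2) * (1 - lam c τ) / (1 + lam c τ) := by
  unfold w₂ w₃
  have h3 : 1 - lam c τ ^ 2 = (1 - lam c τ) * (1 + lam c τ) := by ring
  constructor <;> (rw [h3]; field_simp; ring)

lemma re_quot (z w : ℂ) (hw : w ≠ 0) (h : 0 < z.re * w.re + z.im * w.im) :
    0 < (z / w).re := by
  rw [Complex.div_re, ← add_div]
  exact div_pos h (Complex.normSq_pos.2 hw)

lemma re_pos_plus (s L : ℂ) (h1 : 1 - L ≠ 0)
    (hkey : |2 * s.im * L.im| < s.re * (1 - Complex.normSq L)) :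
    0 < (s * (1 + L) / (1 - L)).re := by
  apply re_quot _ _ h1
  have he : (s * (1 + L)).re * (1 - L).re + (s * (1 + L)).im * (1 - L).im
      = s.re * (1 - Complex.normSq L) - 2 * s.im * L.im := by
    simp [Complex.mul_re, Complex.mul_im, Complex.normSq_apply]
    ring
  rw [he]
  have := abs_lt.1 hkey
  linarith [this.1, this.2]

lemma re_pos_minus (s L : ℂ) (h2 : 1 + L ≠ 0)
    (hkey : |2 * s.im * L.im| < s.re * (1 - Complex.normSq L)) :
    0 < (s * (1 - L) / (1 + L)).re := by
  apply re_quot _ _ h2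
  have he : (s * (1 - L)).re * (1 + L).re + (s * (1 - L)).im * (1 + L).im
      = s.re * (1 - Complex.normSq L) + 2 * s.im * L.im := by
    simp [Complex.mul_re, Complex.mul_im, Complex.normSq_apply]
    ring
  rw [he]
  have := abs_lt.1 hkey
  linarith [this.1, this.2]

end aux

set_option maxHeartbeats 1000000 in
/-- Local Gaussian bound for the Mehler kernel: around every `τ₀ ∈ S_c` there are a
neighbourhood `V₀` and constants `α₁, α₂ > 0`, `α₃` with `2α₂ ± α₃ > 0` such that
`|K_c(τ,x,y)| ≤ α₁ exp(α₃ x y - α₂ (x² + y²))` for all `τ ∈ V₀ ∩ S_c` and `x, y ∈ ℝ`. -/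
theorem mehlerK_local_gaussian_bound (c : ℂ) (hc : 0 < c.re)
    (τ₀ : ℂ) (hτ₀ : τ₀ ∈ sector c) :
    ∃ V₀ ∈ nhds τ₀, ∃ α₁ α₂ α₃ : ℝ, 0 < α₁ ∧ 0 < α₂ ∧
      0 < 2 * α₂ + α₃ ∧ 0 < 2 * α₂ - α₃ ∧
      ∀ τ ∈ V₀ ∩ sector c, ∀ x y : ℝ,
        ‖mehlerK c τ x y‖ ≤
          α₁ * Real.exp (α₃ * x * y - α₂ * (x ^ 2 + y ^ 2)) := by
  have hc0 : c ≠ 0 := fun h => by simp [h] at hc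
  have hs2 : (c ^ ((1:ℂ)/2)) ^ 2 = c := sqrt_sq c
  have ha : 0 < (c ^ ((1:ℂ)/2)).re := sqrt_re_pos c hc
  obtain ⟨hne, hre0, hcre0, him0⟩ := sector_re_facts c hc τ₀ hτ₀
  obtain ⟨hu, huv⟩ := key_uv (c ^ ((1:ℂ)/2)) τ₀ ha hne hre0
    (by rw [hs2]; exact hcre0) (fun h => by rw [hs2] at h ⊢; exact him0 h)
  have hkeyL := key_L (c ^ ((1:ℂ)/2)) τ₀ ha hu huv
  have hlam0 : lam c τ₀ = Complex.exp (-2 * c ^ ((1:ℂ)/2) * τ₀) := rfl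
  have hrelam : (-2 * c ^ ((1:ℂ)/2) * τ₀).re = -2 * (c ^ ((1:ℂ)/2) * τ₀).re := by
    have h : (-2 * c ^ ((1:ℂ)/2) * τ₀) = (-2 : ℂ) * (c ^ ((1:ℂ)/2) * τ₀) := by ring
    rw [h, Complex.mul_re]; simp
  have hL1 : ‖lam c τ₀‖ < 1 := by
    rw [hlam0, Complex.norm_exp, hrelam]
    calc Real.exp (-2 * (c ^ ((1:ℂ)/2) * τ₀).re) < Real.exp 0 :=
          Real.exp_lt_exp.2 (by linarith)
      _ = 1 := Real.exp_zero
  set r : ℝ := (1 + ‖lam c τ₀‖) / 2 with hrdef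
  have habsnn : 0 ≤ ‖lam c τ₀‖ := norm_nonneg _
  have hr0 : 0 < r := by rw [hrdef]; linarith
  have hr1 : r < 1 := by rw [hrdef]; linarith
  have hLr : ‖lam c τ₀‖ < r := by rw [hrdef]; linarith
  have hlamcont : Continuous fun τ : ℂ => lam c τ := by
    unfold lam
    exact Complex.continuous_exp.comp (continuous_const.mul continuous_id)
  have habscont : Continuous fun τ : ℂ => ‖lam c τ‖ :=
    continuous_norm.comp hlamcont
  have hEv1 : ∀ᶠ τ in nhds τ₀, ‖lam c τ‖ < r :=
    (habscont.tendsto τ₀).eventually_lt_const hLr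
  have hden : ∀ τ : ℂ, ‖lam c τ‖ < 1 →
      (1 - lam c τ ^ 2 ≠ 0 ∧ 1 - lam c τ ≠ 0 ∧ 1 + lam c τ ≠ 0) := by
    intro τ hτ
    refine ⟨?_, ?_, ?_⟩
    · intro h
      have h2 : lam c τ ^ 2 = 1 := by linear_combination -h
      have h3 : ‖lam c τ ^ 2‖ < 1 := by
        rw [norm_pow]
        exact pow_lt_one₀ (norm_nonneg _) hτ two_ne_zero
      rw [h2] at h3; simp at h3
    · intro h
      have h2 : lam c τ = 1 := by linear_combination -h
      rw [h2] at hτ; simp at hτ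
    · intro h
      have h2 : lam c τ = -1 := by linear_combination h
      rw [h2] at hτ; simp at hτ
  obtain ⟨hd2, hd1, hd1'⟩ := hden τ₀ hL1
  have hw2cont : ContinuousAt (fun τ => w₂ c τ) τ₀ := by
    unfold w₂
    apply ContinuousAt.div
    · exact continuousAt_const.mul (continuousAt_const.add ((hlamcont.continuousAt).pow 2))
    · exact continuousAt_const.mul (continuousAt_const.sub ((hlamcont.continuousAt).pow 2))
    · exact mul_ne_zero two_ne_zero hd2
  have hw3cont : ContinuousAt (fun τ => w₃ c τ) τ₀ := by
    unfold w₃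
    apply ContinuousAt.div
    · exact continuousAt_const.mul hlamcont.continuousAt
    · exact continuousAt_const.sub ((hlamcont.continuousAt).pow 2)
    · exact hd2
  set d₀ : ℝ := 2 * (w₂ c τ₀).re - |(w₃ c τ₀).re| with hd₀def
  have hDcont : ContinuousAt (fun τ => 2 * (w₂ c τ).re - |(w₃ c τ).re|) τ₀ := by
    apply ContinuousAt.sub
    · exact continuousAt_const.mul (Complex.continuous_re.continuousAt.comp hw2cont)
    · exact (Complex.continuous_re.continuousAt.comp hw3cont).abs
  have hD0 : 0 < d₀ := by
    obtain ⟨hplus, hminus⟩ := wident c τ₀ hd1 hd1'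
    have hp : 0 < (2 * w₂ c τ₀ + w₃ c τ₀).re := by
      rw [hplus]
      exact re_pos_plus _ _ hd1 hkeyL
    have hm : 0 < (2 * w₂ c τ₀ - w₃ c τ₀).re := by
      rw [hminus]
      exact re_pos_minus _ _ hd1' hkeyL
    have hp' : 0 < 2 * (w₂ c τ₀).re + (w₃ c τ₀).re := by
      simpa [Complex.add_re, Complex.mul_re] using hp
    have hm' : 0 < 2 * (w₂ c τ₀).re - (w₃ c τ₀).re := by
      simpa [Complex.sub_re, Complex.mul_re] using hm
    have habs : |(w₃ c τ₀).re| < 2 * (w₂ c τ₀).re := abs_lt.2 ⟨by linarith, by linarith⟩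
    rw [hd₀def]
    linarith
  have hEv2 : ∀ᶠ τ in nhds τ₀, d₀ / 2 < 2 * (w₂ c τ).re - |(w₃ c τ).re| :=
    hDcont.eventually_const_lt
      (by show d₀ / 2 < 2 * (w₂ c τ₀).re - |(w₃ c τ₀).re|; rw [← hd₀def]; linarith)
  have hpr2 : 0 < Real.pi * (1 - r ^ 2) :=
    mul_pos Real.pi_pos (by nlinarith : (0:ℝ) < 1 - r ^ 2)
  set α₁ : ℝ := ‖c ^ ((1:ℂ)/4)‖ * (Real.pi * (1 - r ^ 2)) ^ (-(1/2) : ℝ)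
    with hα₁def
  have hc4 : (c ^ ((1:ℂ)/4)) ≠ 0 := by
    rw [Complex.cpow_def_of_ne_zero hc0]; exact Complex.exp_ne_zero _
  have hα₁ : 0 < α₁ := by
    rw [hα₁def]
    exact mul_pos (norm_pos_iff.mpr hc4) (Real.rpow_pos_of_pos hpr2 _)
  refine ⟨{τ | ‖lam c τ‖ < r ∧ d₀ / 2 < 2 * (w₂ c τ).re - |(w₃ c τ).re|},
    hEv1.and hEv2, α₁, d₀ / 4, 0,
    hα₁, by linarith, by linarith, by linarith, ?_⟩
  rintro τ ⟨⟨hrτ, hDτ⟩, hτsec⟩ x y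
  obtain ⟨hd2τ, hd1τ, hd1τ'⟩ := hden τ (hrτ.trans hr1)
  have hw1 : ‖w₁ c τ‖ ≤ α₁ := by
    unfold w₁
    rw [norm_mul, norm_mul]
    have e1 : ‖lam c τ ^ ((1:ℂ)/2)‖ ≤ 1 := by
      have hcast : ((1:ℂ)/2) = ((1/2 : ℝ) : ℂ) := by norm_num
      rw [hcast, Complex.norm_cpow_real]
      exact Real.rpow_le_one (norm_nonneg _) (le_of_lt (hrτ.trans hr1)) (by norm_num)
    have e2 : ‖((Real.pi : ℂ) * (1 - lam c τ ^ 2)) ^ (-(1:ℂ)/2)‖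
        ≤ (Real.pi * (1 - r ^ 2)) ^ (-(1/2) : ℝ) := by
      have hcast : (-(1:ℂ)/2) = ((-(1/2) : ℝ) : ℂ) := by norm_num
      rw [hcast, Complex.norm_cpow_real]
      apply Real.rpow_le_rpow_of_nonpos hpr2 _ (by norm_num)
      rw [norm_mul, Complex.norm_real, Real.norm_of_nonneg Real.pi_pos.le]
      have habs2 : ‖lam c τ ^ 2‖ ≤ r ^ 2 := by
        rw [norm_pow]
        exact pow_le_pow_left₀ (norm_nonneg _) hrτ.le 2
      have h1 : 1 - r ^ 2 ≤ ‖1 - lam c τ ^ 2‖ := by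
        have h := norm_sub_norm_le (1 : ℂ) (lam c τ ^ 2)
        simp only [norm_one] at h
        linarith
      nlinarith [Real.pi_pos]
    calc ‖c ^ ((1:ℂ)/4)‖ * ‖lam c τ ^ ((1:ℂ)/2)‖ *
          ‖((Real.pi : ℂ) * (1 - lam c τ ^ 2)) ^ (-(1:ℂ)/2)‖
        ≤ ‖c ^ ((1:ℂ)/4)‖ * 1 * ((Real.pi * (1 - r ^ 2)) ^ (-(1/2) : ℝ)) := by
          have hnn : (0:ℝ) ≤ ‖c ^ ((1:ℂ)/4)‖ * ‖lam c τ ^ ((1:ℂ)/2)‖ :=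
            mul_nonneg (norm_nonneg _) (norm_nonneg _)
          apply mul_le_mul _ e2 (norm_nonneg _) (by positivity)
          exact mul_le_mul le_rfl e1 (norm_nonneg _) (norm_nonneg _)
      _ = α₁ := by rw [hα₁def]; ring
  have hzre : (w₃ c τ * (x:ℂ) * (y:ℂ) - w₂ c τ * ((x:ℂ)^2 + (y:ℂ)^2)).re
      = (w₃ c τ).re * x * y - (w₂ c τ).re * (x^2 + y^2) := by
    simp only [Complex.sub_re, Complex.mul_re, Complex.mul_im, Complex.add_re, Complex.add_im,
      ← Complex.ofReal_pow, Complex.ofReal_re, Complex.ofReal_im]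
    ring
  have hxy2 : (w₃ c τ).re * x * y ≤ |(w₃ c τ).re| * ((x^2 + y^2)/2) := by
    have h1 : (w₃ c τ).re * x * y ≤ |(w₃ c τ).re * x * y| := le_abs_self _
    rw [abs_mul, abs_mul] at h1
    have h2 : |x| * |y| ≤ (x^2+y^2)/2 := by
      nlinarith [sq_nonneg (|x| - |y|), _root_.sq_abs x, _root_.sq_abs y]
    calc (w₃ c τ).re * x * y ≤ |(w₃ c τ).re| * |x| * |y| := h1
      _ = |(w₃ c τ).re| * (|x| * |y|) := by ring
      _ ≤ |(w₃ c τ).re| * ((x^2 + y^2)/2) :=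
          mul_le_mul_of_nonneg_left h2 (abs_nonneg _)
  have hexp : (w₃ c τ).re * x * y - (w₂ c τ).re * (x^2+y^2)
      ≤ 0 * x * y - d₀ / 4 * (x^2+y^2) := by
    have hx2 : (0:ℝ) ≤ x^2 + y^2 := by positivity
    have hco : d₀ / 4 ≤ (w₂ c τ).re - |(w₃ c τ).re| / 2 := by linarith
    nlinarith [mul_le_mul_of_nonneg_right hco hx2, hxy2]
  unfold mehlerK
  rw [norm_mul, Complex.norm_exp, hzre]
  exact mul_le_mul hw1 (Real.exp_le_exp.2 hexp) (Real.exp_pos _).le hα₁.le
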